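/- Let p be a prime, x an integer, and suppose m is the minimal positive integer with T_m(x) ≡ 1 (mod p). Then for any positive integer n, T_n(x) ≡ 1 (mod p) if and only if m divides n. -/

import Mathlib

open Polynomial Polynomial.Chebyshev

theorem chebyshev_order_divides (p : ℕ) (hp : p.Prime) (x : ℤ) (m : ℕ)
    (hm : IsLeast {k : ℕ | 0 < k ∧ (T ℤ k).eval x ≡ 1 [ZMOD p]} m) (n : ℕ) (hn : 0 < n) :
    (T ℤ n).eval x ≡ 1 [ZMOD p] ↔ m ∣ n := by
  haveI : Fact p.Prime := ⟨hp⟩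
  set t : ℕ → ℤ := fun k => (T ℤ k).eval x with ht_def
  have hrec : ∀ k : ℕ, t (k + 2) = 2 * x * t (k + 1) - t k := by
    intro k
    have : ((k:ℤ) + 1 + 1) = ((k:ℤ) + 2) := by ring
    simp only [ht_def, Nat.cast_add, Nat.cast_ofNat, Nat.cast_one]
    rw [T_add_two]
    simp
  -- case p = 2
  rcases eq_or_ne p 2 with rfl | hp2
  · have hmod : ∀ k : ℕ, t k ≡ t (k % 2) [ZMOD 2] := by
      intro k
      induction k using Nat.strong_induction_on with
      | _ k ih =>
        match k with
        | 0 => rfl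
        | 1 => rfl
        | (k+2) =>
          have h1 : t (k+2) ≡ t k [ZMOD 2] := by
            rw [hrec k]
            exact (Int.modEq_iff_dvd.mpr ⟨t k - x * t (k+1), by ring⟩)
          have : (k+2) % 2 = k % 2 := by omega
          rw [this]
          exact h1.trans (ih k (by omega))
    have ht0 : t 0 = 1 := by simp [ht_def]
    have ht1 : t 1 = x := by simp [ht_def]
    rcases Int.even_or_odd x with hx | hx
    · -- x even, m = 2
      obtain ⟨c, hc⟩ := hx
      have h2S : (2:ℕ) ∈ {k : ℕ | 0 < k ∧ (T ℤ k).eval x ≡ 1 [ZMOD (2:ℕ)]} := by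
        refine ⟨by norm_num, ?_⟩
        show t 2 ≡ 1 [ZMOD (2:ℕ)]
        rw [hrec 0, ht1, ht0]
        exact Int.modEq_iff_dvd.mpr ⟨1 - x * x, by push_cast; ring⟩
      have h1nS : ¬ (t 1 ≡ 1 [ZMOD (2:ℕ)]) := by
        rw [ht1]
        intro h
        simp only [Int.ModEq] at h
        omega
      have hm2 : m = 2 := by
        have hle := hm.2 h2S
        have h0 := hm.1.1
        have h1 : m ≠ 1 := by rintro rfl; exact h1nS hm.1.2
        omega
      rw [hm2]
      constructor
      · intro h
        by_contra h2
        have hn1 : n % 2 = 1 := by omega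
        have h3 : t (n % 2) ≡ 1 [ZMOD (2:ℕ)] := (hmod n).symm.trans h
        rw [hn1] at h3
        exact h1nS h3
      · rintro ⟨c, rfl⟩
        have : (2 * c) % 2 = 0 := by omega
        exact (hmod (2*c)).trans (by rw [this, ht0])
    · -- x odd, m = 1
      obtain ⟨c, hc⟩ := hx
      have hx1 : x ≡ 1 [ZMOD (2:ℕ)] := Int.modEq_iff_dvd.mpr ⟨-c, by push_cast; omega⟩
      have h1S : (1:ℕ) ∈ {k : ℕ | 0 < k ∧ (T ℤ k).eval x ≡ 1 [ZMOD (2:ℕ)]} := by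
        refine ⟨by norm_num, ?_⟩
        show t 1 ≡ 1 [ZMOD (2:ℕ)]
        rw [ht1]; exact hx1
      have hm1 : m = 1 := le_antisymm (hm.2 h1S) hm.1.1
      rw [hm1]
      simp only [one_dvd, iff_true]
      refine (hmod n).trans ?_
      rcases Nat.mod_two_eq_zero_or_one n with h | h <;> rw [h]
      · rw [ht0]
      · rw [ht1]; exact hx1
  · -- p ≠ 2
    set K := AlgebraicClosure (ZMod p) with hK
    have hchar : CharP K p := charP_of_injective_algebraMap (algebraMap (ZMod p) K).injective p
    have h2 : (2 : K) ≠ 0 := by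
      intro h
      have h2' : (p:ℕ) ∣ 2 := (CharP.cast_eq_zero_iff K p 2).mp (by exact_mod_cast h)
      exact hp2 ((Nat.prime_dvd_prime_iff_eq hp Nat.prime_two).mp h2')
    obtain ⟨u, hu⟩ : ∃ u : K, u ^ 2 - 2 * (x:K) * u + 1 = 0 := by
      obtain ⟨u, hu⟩ := IsAlgClosed.exists_root (k := K) (X ^ 2 - C (2 * (x:K)) * X + 1) (by
        intro h
        have hdeg : (X ^ 2 - C (2 * (x:K)) * X + 1 : K[X]).degree = 2 := by compute_degree!
        rw [h] at hdeg; simp at hdeg)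
      exact ⟨u, by have := hu; rw [IsRoot.def] at this; simpa using this⟩
    have ht0 : t 0 = 1 := by simp [ht_def]
    have ht1 : t 1 = x := by simp [ht_def]
    have key : ∀ k : ℕ, 2 * ((t k : ℤ) : K) * u ^ k = u ^ (2 * k) + 1 := by
      intro k
      induction k using Nat.twoStepInduction with
      | zero => rw [ht0]; norm_num
      | one => rw [ht1]; push_cast; linear_combination -hu
      | more k ihA ihB =>
        rw [hrec k]
        push_cast
        have e : ((2 * x * t (k + 1) : ℤ) : K) = 2 * (x:K) * ((t (k+1) : ℤ) : K) := by
          rw [Int.cast_mul, Int.cast_mul]; norm_num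
        rw [e]
        linear_combination (2 * (x:K) * u) * ihB - u ^ 2 * ihA - (u ^ (2*k+2) + 1) * hu
    have bridge : ∀ k : ℕ, (t k ≡ 1 [ZMOD p] ↔ u ^ k = 1) := by
      intro k
      have hinj : Function.Injective (algebraMap (ZMod p) K) := (algebraMap (ZMod p) K).injective
      have iff1 : t k ≡ 1 [ZMOD p] ↔ ((t k : ℤ) : K) = 1 := by
        rw [show ((t k : ℤ) : K) = algebraMap (ZMod p) K ((t k : ℤ) : ZMod p) from (map_intCast (algebraMap (ZMod p) K) (t k)).symm]
        rw [show (1 : K) = algebraMap (ZMod p) K 1 from (map_one _).symm, hinj.eq_iff]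
        rw [show (1 : ZMod p) = ((1:ℤ) : ZMod p) by norm_num, ZMod.intCast_eq_intCast_iff]
      rw [iff1]
      constructor
      · intro h
        have hk := key k
        rw [h] at hk
        have hsq : (u ^ k - 1) ^ 2 = 0 := by linear_combination -hk
        exact sub_eq_zero.mp (sq_eq_zero_iff.mp hsq)
      · intro h
        have hk := key k
        rw [h, show 2 * k = k * 2 by ring, pow_mul, h, one_pow] at hk
        have h2' : 2 * ((t k : ℤ) : K) = 2 * 1 := by linear_combination hk
        exact mul_left_cancel₀ h2 h2'
    have hum : u ^ m = 1 := (bridge m).mp hm.1.2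
    have hfin : IsOfFinOrder u := isOfFinOrder_iff_pow_eq_one.mpr ⟨m, hm.1.1, hum⟩
    have hord : orderOf u = m :=
      le_antisymm (orderOf_le_of_pow_eq_one hm.1.1 hum)
        (hm.2 ⟨hfin.orderOf_pos, (bridge _).mpr (pow_orderOf_eq_one u)⟩)
    rw [show ((T ℤ (n:ℤ)).eval x ≡ 1 [ZMOD p]) = (t n ≡ 1 [ZMOD p]) from rfl, bridge n, ← hord,
      orderOf_dvd_iff_pow_eq_one]
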